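/- Let f = (α_f, σ_f) ∈ G_n and T = (α_T, σ_T) ∈ G_n with T f T⁻¹ = f⁻¹, and suppose there exist an odd integer s and an integer t such that σ_T^s = σ_f^t. Then: (1) σ_f² = identity; (2) f is strongly reversible in G_n (reversible by an involution of G_n); and (3) f⁴ = identity. -/

import Mathlib

abbrev Circle1 : Type := AddCircle (1 : ℝ)

abbrev Gn (n : ℕ) : Type := (Fin n → Circle1) × Equiv.Perm (Fin n)

namespace Gn
variable {n : ℕ}

noncomputable instance : Mul (Gn n) := ⟨fun f g => ⟨fun j => g.1 j + f.1 (g.2 j), f.2 * g.2⟩⟩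
noncomputable instance : One (Gn n) := ⟨⟨fun _ => 0, 1⟩⟩
noncomputable instance : Inv (Gn n) := ⟨fun f => ⟨fun j => -f.1 (f.2⁻¹ j), f.2⁻¹⟩⟩

noncomputable instance : Group (Gn n) where
  mul_assoc f g h := Prod.ext (funext fun j => (add_assoc _ _ _).symm) rfl
  one_mul f := Prod.ext (funext fun j => add_zero _) (one_mul _)
  mul_one f := Prod.ext (funext fun j => zero_add _) (mul_one _)
  inv_mul_cancel f := Prod.ext
    (funext fun j => show f.1 j + -f.1 (f.2⁻¹ (f.2 j)) = 0 by simp)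
    (inv_mul_cancel _)

@[simp] lemma mul_fst (f g : Gn n) (j : Fin n) : (f * g).1 j = g.1 j + f.1 (g.2 j) := rfl
@[simp] lemma mul_snd (f g : Gn n) : (f * g).2 = f.2 * g.2 := rfl
@[simp] lemma one_fst (j : Fin n) : (1 : Gn n).1 j = 0 := rfl
@[simp] lemma one_snd : (1 : Gn n).2 = 1 := rfl
@[simp] lemma inv_fst (f : Gn n) (j : Fin n) : (f⁻¹).1 j = -f.1 (f.2⁻¹ j) := rfl
@[simp] lemma inv_snd (f : Gn n) : (f⁻¹).2 = f.2⁻¹ := rfl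


end Gn

private lemma zpow_inv_aux {X M : Type*} (c : X → M) (u : Equiv.Perm X)
    (hu : ∀ j, c (u j) = c j) : ∀ (k : ℤ) (j : X), c ((u ^ k) j) = c j := by
  have hu' : ∀ j, c (u⁻¹ j) = c j := fun j => by
    conv_rhs => rw [← (id (Equiv.apply_symm_apply u j) : u (u⁻¹ j) = j)]
    rw [hu]
  intro k
  induction k using Int.induction_on with
  | zero => intro j; simp
  | succ m ih => intro j; rw [zpow_add_one, Equiv.Perm.mul_apply, ih, hu]
  | pred m ih => intro j; rw [zpow_sub_one, Equiv.Perm.mul_apply, ih, hu']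

private lemma zpow_inv_aux2 {X M : Type*} (P : X → Prop) (c : X → M) (u : Equiv.Perm X)
    (hP : ∀ j, P j ↔ P (u j)) (hc : ∀ j, P j → c (u j) = c j) :
    ∀ (k : ℤ) (j : X), P j → P ((u ^ k) j) ∧ c ((u ^ k) j) = c j := by
  have hP' : ∀ j, P j ↔ P (u⁻¹ j) := fun j => by
    conv_lhs => rw [← (id (Equiv.apply_symm_apply u j) : u (u⁻¹ j) = j)]
    exact (hP _).symm
  have hc' : ∀ j, P j → c (u⁻¹ j) = c j := fun j hj => by
    have h2 : P (u⁻¹ j) := (hP' j).mp hj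
    have := hc _ h2
    rw [(id (Equiv.apply_symm_apply u j) : u (u⁻¹ j) = j)] at this
    exact this.symm
  intro k
  induction k using Int.induction_on with
  | zero => intro j hj; simpa using hj
  | succ m ih =>
    intro j hj
    obtain ⟨h1, h2⟩ := ih (u j) ((hP j).mp hj)
    rw [zpow_add_one, Equiv.Perm.mul_apply]
    exact ⟨h1, h2.trans (hc j hj)⟩
  | pred m ih =>
    intro j hj
    obtain ⟨h1, h2⟩ := ih (u⁻¹ j) ((hP' j).mp hj)
    rw [zpow_sub_one, Equiv.Perm.mul_apply]
    exact ⟨h1, h2.trans (hc' j hj)⟩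

private lemma zpow_fix {X : Type*} (u : Equiv.Perm X) (j : X) (h : u j = j) (k : ℤ) :
    (u ^ k) j = j := by
  have h' : u⁻¹ j = j := by conv_lhs => rw [← h, (id (Equiv.symm_apply_apply u j) : u⁻¹ (u j) = j)]
  induction k using Int.induction_on with
  | zero => simp
  | succ m ih => rw [zpow_add_one, Equiv.Perm.mul_apply, h, ih]
  | pred m ih => rw [zpow_sub_one, Equiv.Perm.mul_apply, h', ih]

/-- If `T` reverses `f` in `G_n` and some odd power of `σ_T` is a power of `σ_f`, then
`σ_f` is an involution, `f` is strongly reversible in `G_n`, and `f⁴ = 1`. -/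
theorem stmt16 {n : ℕ} (f T : Gn n) (hrev : T * f * T⁻¹ = f⁻¹)
    (hpow : ∃ s t : ℤ, Odd s ∧ T.2 ^ s = f.2 ^ t) :
    f.2 * f.2 = 1 ∧
      (∃ T' : Gn n, T' * T' = 1 ∧ T' * f * T'⁻¹ = f⁻¹) ∧
      f ^ 4 = 1 := by
  obtain ⟨s, t, hs, hst⟩ := hpow
  obtain ⟨k, hk⟩ := hs
  -- component equations
  have hsnd : T.2 * f.2 * T.2⁻¹ = f.2⁻¹ := congrArg Prod.snd hrev
  have hfst : ∀ j, -T.1 (T.2⁻¹ j) + (f.1 (T.2⁻¹ j) + T.1 (f.2 (T.2⁻¹ j))) = -f.1 (f.2⁻¹ j) :=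
    fun j => congrFun (congrArg Prod.fst hrev) j
  -- step 1 : f.2 is an involution
  have hτe1 : T.2 * f.2 = f.2⁻¹ * T.2 := by
    have h := congrArg (· * T.2) hsnd
    simpa [mul_assoc] using h
  have hτe2 : T.2 * f.2⁻¹ = f.2 * T.2 := by
    have h : SemiconjBy T.2 f.2 f.2⁻¹ := hτe1
    simpa [SemiconjBy] using h.inv_right
  have hcomm : Commute (T.2 * T.2) f.2 := by
    have h1 : SemiconjBy T.2 f.2 f.2⁻¹ := hτe1
    have h2 : SemiconjBy T.2 f.2⁻¹ f.2 := hτe2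
    exact h2.mul_left h1
  have key : T.2 ^ s = (T.2 * T.2) ^ k * T.2 := by
    rw [hk, zpow_add, zpow_one, zpow_mul, zpow_two]
  have h3 : T.2 ^ s * f.2 * (T.2 ^ s)⁻¹ = f.2⁻¹ := by
    rw [key]
    have hck : Commute ((T.2 * T.2) ^ k) f.2⁻¹ := (hcomm.zpow_left k).inv_right
    calc ((T.2 * T.2) ^ k * T.2) * f.2 * (((T.2 * T.2) ^ k * T.2))⁻¹
        = (T.2 * T.2) ^ k * (T.2 * f.2 * T.2⁻¹) * ((T.2 * T.2) ^ k)⁻¹ := by group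
      _ = (T.2 * T.2) ^ k * f.2⁻¹ * ((T.2 * T.2) ^ k)⁻¹ := by rw [hsnd]
      _ = f.2⁻¹ := by rw [hck.eq]; group
  have h4 : T.2 ^ s * f.2 * (T.2 ^ s)⁻¹ = f.2 := by
    rw [hst]
    have hce : Commute (f.2 ^ t) f.2 := (Commute.refl f.2).zpow_left t
    rw [hce.eq]; group
  have h5 : f.2⁻¹ = f.2 := h3.symm.trans h4
  have he2 : f.2 * f.2 = 1 := mul_eq_one_iff_eq_inv.mpr h5.symm
  have hee : ∀ j, f.2 (f.2 j) = j := fun j => by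
    rw [← Equiv.Perm.mul_apply, he2, Equiv.Perm.one_apply]
  have hτeapp : ∀ j, T.2 (f.2 j) = f.2 (T.2 j) := by
    have h : T.2 * f.2 = f.2 * T.2 := by rw [hτe1, h5]
    intro j; rw [← Equiv.Perm.mul_apply, h, Equiv.Perm.mul_apply]
  -- the key pointwise relation from the first components
  have H : ∀ j, f.1 (f.2 (T.2 j)) = T.1 j - (f.1 j + T.1 (f.2 j)) := by
    intro j
    have h := hfst (T.2 j)
    rw [(id (Equiv.symm_apply_apply T.2 j) : T.2⁻¹ (T.2 j) = j), h5] at h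
    have h3' := congrArg Neg.neg h
    simp only [neg_neg] at h3'
    rw [← h3']; abel
  have hfixτfix : ∀ j, f.2 j = j → f.2 (T.2 j) = T.2 j := fun j hj => by
    rw [← hτeapp, hj]
  have hfixτ : ∀ j, f.2 j = j → f.1 (T.2 j) = -f.1 j := by
    intro j hj
    have h := H j
    rw [← hτeapp, hj] at h
    rw [h]; abel
  -- β(τ j) = -β j
  have hβτ : ∀ j, f.1 (T.2 j) + f.1 (f.2 (T.2 j)) = -(f.1 j + f.1 (f.2 j)) := by
    intro j
    have h1 := H j
    have h2 := H (f.2 j)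
    rw [hτeapp, hee, hee] at h2
    rw [h1, h2]; abel
  -- 2β = 0
  have h2β : ∀ j, (f.1 j + f.1 (f.2 j)) + (f.1 j + f.1 (f.2 j)) = 0 := by
    have hcu : ∀ j, (fun i => f.1 i + f.1 (f.2 i)) ((T.2 * T.2) j)
        = (fun i => f.1 i + f.1 (f.2 i)) j := by
      intro j
      simp only [Equiv.Perm.mul_apply]
      rw [hβτ (T.2 j), hβτ j, neg_neg]
    have hce : ∀ j, (fun i => f.1 i + f.1 (f.2 i)) (f.2 j)
        = (fun i => f.1 i + f.1 (f.2 i)) j := by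
      intro j
      simp only
      rw [hee]
      abel
    intro j
    have e1 : f.1 ((T.2 ^ s) j) + f.1 (f.2 ((T.2 ^ s) j)) = -(f.1 j + f.1 (f.2 j)) := by
      have := zpow_inv_aux (fun i => f.1 i + f.1 (f.2 i)) (T.2 * T.2) hcu k (T.2 j)
      rw [key, Equiv.Perm.mul_apply, this, hβτ j]
    have e2 : f.1 ((T.2 ^ s) j) + f.1 (f.2 ((T.2 ^ s) j)) = f.1 j + f.1 (f.2 j) := by
      have := zpow_inv_aux (fun i => f.1 i + f.1 (f.2 i)) f.2 hce t j
      rw [hst, this]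
    have : f.1 j + f.1 (f.2 j) = -(f.1 j + f.1 (f.2 j)) := e2.symm.trans e1
    exact add_eq_zero_iff_eq_neg.mpr this
  -- 2α = 0 on fixed points of f.2
  have h2fix : ∀ j, f.2 j = j → f.1 j + f.1 j = 0 := by
    have hue : ∀ j, f.2 ((T.2 * T.2) j) = (T.2 * T.2) (f.2 j) := by
      intro j
      simp only [Equiv.Perm.mul_apply]
      rw [← hτeapp, ← hτeapp]
    have hP : ∀ j, f.2 j = j ↔ f.2 ((T.2 * T.2) j) = (T.2 * T.2) j := by
      intro j
      constructor
      · intro h; rw [hue, h]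
      · intro h; rw [hue] at h; exact (Equiv.apply_eq_iff_eq _).mp h
    have hcα : ∀ j, f.2 j = j → f.1 ((T.2 * T.2) j) = f.1 j := by
      intro j hj
      simp only [Equiv.Perm.mul_apply]
      rw [hfixτ (T.2 j) (hfixτfix j hj), hfixτ j hj, neg_neg]
    intro j hj
    obtain ⟨_, hval⟩ := zpow_inv_aux2 (fun i => f.2 i = i) f.1 (T.2 * T.2) hP hcα k (T.2 j)
      (hfixτfix j hj)
    have hτsj : (T.2 ^ s) j = ((T.2 * T.2) ^ k) (T.2 j) := by
      rw [key, Equiv.Perm.mul_apply]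
    have hetj : (f.2 ^ t) j = j := zpow_fix f.2 j hj t
    have hneg : f.1 j = -f.1 j := by
      have h1 : f.1 ((T.2 ^ s) j) = -f.1 j := by rw [hτsj, hval, hfixτ j hj]
      rw [← h1, hst, hetj]
    exact add_eq_zero_iff_eq_neg.mpr hneg
  refine ⟨he2, ⟨⟨fun j => if j ≤ f.2 j then f.1 j else -f.1 (f.2 j), f.2⟩, ?_, ?_⟩, ?_⟩
  · -- T' is an involution
    refine Prod.ext (funext fun j => ?_) ?_
    · show (if j ≤ f.2 j then f.1 j else -f.1 (f.2 j))
        + (if f.2 j ≤ f.2 (f.2 j) then f.1 (f.2 j) else -f.1 (f.2 (f.2 j))) = 0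
      rw [hee]
      rcases lt_trichotomy j (f.2 j) with h | h | h
      · rw [if_pos h.le, if_neg (not_le.mpr h)]
        abel
      · have hj : f.2 j = j := h.symm
        rw [hj, if_pos le_rfl]
        exact h2fix j hj
      · rw [if_neg (not_le.mpr h), if_pos h.le]
        abel
    · show f.2 * f.2 = 1
      exact he2
  · -- T' reverses f
    refine Prod.ext (funext fun j => ?_) ?_
    · show -(if f.2⁻¹ j ≤ f.2 (f.2⁻¹ j) then f.1 (f.2⁻¹ j) else -f.1 (f.2 (f.2⁻¹ j)))
        + (f.1 (f.2⁻¹ j) + (if f.2 (f.2⁻¹ j) ≤ f.2 (f.2 (f.2⁻¹ j)) then f.1 (f.2 (f.2⁻¹ j))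
            else -f.1 (f.2 (f.2 (f.2⁻¹ j))))) = -f.1 (f.2⁻¹ j)
      rw [h5, hee]
      rcases lt_trichotomy j (f.2 j) with h | h | h
      · rw [if_neg (not_le.mpr h), if_pos h.le]
        have hb := h2β j
        rw [← sub_eq_zero]
        calc -(-f.1 j) + (f.1 (f.2 j) + f.1 j) - -f.1 (f.2 j)
            = (f.1 j + f.1 (f.2 j)) + (f.1 j + f.1 (f.2 j)) := by abel
          _ = 0 := hb
      · have hj : f.2 j = j := h.symm
        rw [hj, if_pos le_rfl, h2fix j hj, add_zero]
      · rw [if_pos h.le, if_neg (not_le.mpr h)]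
        abel
    · show f.2 * f.2 * f.2⁻¹ = f.2⁻¹
      rw [he2, one_mul]
  · -- f ^ 4 = 1
    rw [show (4 : ℕ) = 2 + 2 from rfl, pow_add, pow_two]
    refine Prod.ext (funext fun j => ?_) ?_
    · show (f.1 j + f.1 (f.2 j)) + (f.1 ((f.2 * f.2) j) + f.1 (f.2 ((f.2 * f.2) j))) = 0
      rw [Equiv.Perm.mul_apply, hee j]
      exact h2β j
    · show (f.2 * f.2) * (f.2 * f.2) = 1
      rw [he2, one_mul]
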